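/- The product of two forms, each lying in the interior of its respective sums-of-squares cone, again lies in the interior of the sums-of-squares cone of the appropriate degree. -/

import Mathlib

open MvPolynomial Finsupp

/-- `f` is a sum of squares of forms of degree `d` in `n` variables. -/
def IsSOSForm (n d : ℕ) (f : MvPolynomial (Fin n) ℝ) : Prop :=
  ∃ (N : ℕ) (g : Fin N → MvPolynomial (Fin n) ℝ),
    (∀ i, (g i).IsHomogeneous d) ∧ f = ∑ i, (g i) ^ 2

/-- The cone `Σ_{2d}` of sums of squares of degree-`d` forms, as a subset of the
finite-dimensional real vector space `R[x]_{2d}` of forms of degree `2d`. -/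
def SigmaCone (n d : ℕ) : Set (homogeneousSubmodule (Fin n) ℝ (2 * d)) :=
  {f | IsSOSForm n d (f : MvPolynomial (Fin n) ℝ)}

/-- The canonical topology on the finite-dimensional real vector space of forms. -/
noncomputable instance (n d : ℕ) : TopologicalSpace (homogeneousSubmodule (Fin n) ℝ d) :=
  moduleTopology ℝ _

/-- A form is positive definite if it is positive away from the origin. -/
def PosDefForm (n : ℕ) (f : MvPolynomial (Fin n) ℝ) : Prop :=
  ∀ x : Fin n → ℝ, x ≠ 0 → 0 < eval x f

/-- For a sos form `f` of degree `2d`, the set `U_f` of forms `p` of degree `d`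
such that `f - c p ^ 2` is sos for some `c > 0`. -/
def Uset (n d : ℕ) (f : MvPolynomial (Fin n) ℝ) : Set (MvPolynomial (Fin n) ℝ) :=
  {p | p.IsHomogeneous d ∧ ∃ c : ℝ, 0 < c ∧ IsSOSForm n d (f - c • p ^ 2)}

namespace SOSAux

open Finset

instance (n m : ℕ) : IsModuleTopology ℝ (homogeneousSubmodule (Fin n) ℝ m) := ⟨rfl⟩

variable {n : ℕ}

lemma degree_sum_univ (d : Fin n →₀ ℕ) : d.degree = ∑ i : Fin n, d i := by
  rw [Finsupp.degree]
  exact Finset.sum_subset (Finset.subset_univ _) (by simp [Finsupp.notMem_support_iff])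

lemma degree_add' (a b : Fin n →₀ ℕ) : (a + b).degree = a.degree + b.degree := by
  simp [degree_eq_weight_one, map_add]

lemma degree_single' (i : Fin n) (m : ℕ) : (Finsupp.single i m).degree = m := by
  simp [degree_sum_univ, Finsupp.single_apply]

lemma isHomogeneous_smul {d : ℕ} (c : ℝ) {p : MvPolynomial (Fin n) ℝ}
    (hp : p.IsHomogeneous d) : (c • p).IsHomogeneous d :=
  (mem_homogeneousSubmodule _ _).mp <|
    Submodule.smul_mem _ c ((mem_homogeneousSubmodule _ _).mpr hp)

lemma isSOSForm_zero (d : ℕ) : IsSOSForm n d 0 :=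
  ⟨0, fun _ => 0, fun i => i.elim0, by simp⟩

lemma _root_.IsSOSForm.add {d : ℕ} {f g : MvPolynomial (Fin n) ℝ}
    (hf : IsSOSForm n d f) (hg : IsSOSForm n d g) : IsSOSForm n d (f + g) := by
  obtain ⟨N, a, ha, rfl⟩ := hf
  obtain ⟨M, b, hb, rfl⟩ := hg
  refine ⟨N + M, Fin.addCases a b, fun i => ?_, ?_⟩
  · refine Fin.addCases (fun i => by simp [ha i]) (fun i => by simp [hb i]) i
  · rw [Fin.sum_univ_add]; simp

lemma isSOSForm_sq {d : ℕ} {p : MvPolynomial (Fin n) ℝ} (hp : p.IsHomogeneous d) :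
    IsSOSForm n d (p ^ 2) :=
  ⟨1, fun _ => p, fun _ => hp, by simp⟩

lemma _root_.IsSOSForm.smul {d : ℕ} {f : MvPolynomial (Fin n) ℝ} {c : ℝ} (hc : 0 ≤ c)
    (hf : IsSOSForm n d f) : IsSOSForm n d (c • f) := by
  obtain ⟨N, a, ha, rfl⟩ := hf
  refine ⟨N, fun i => Real.sqrt c • a i, fun i => isHomogeneous_smul _ (ha i), ?_⟩
  rw [Finset.smul_sum]
  refine Finset.sum_congr rfl fun i _ => ?_
  rw [smul_pow, Real.sq_sqrt hc]

lemma _root_.IsSOSForm.mul {d e : ℕ} {f g : MvPolynomial (Fin n) ℝ}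
    (hf : IsSOSForm n d f) (hg : IsSOSForm n e g) : IsSOSForm n (d + e) (f * g) := by
  obtain ⟨N, a, ha, rfl⟩ := hf
  obtain ⟨M, b, hb, rfl⟩ := hg
  refine ⟨N * M, fun i => a (finProdFinEquiv.symm i).1 * b (finProdFinEquiv.symm i).2,
    fun i => (ha _).mul (hb _), ?_⟩
  calc (∑ i, a i ^ 2) * (∑ j, b j ^ 2)
      = ∑ p : Fin N × Fin M, (a p.1 * b p.2) ^ 2 := by
        rw [Finset.sum_mul_sum, Fintype.sum_prod_type]
        simp [mul_pow]
    _ = ∑ i : Fin (N * M),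
          (a (finProdFinEquiv.symm i).1 * b (finProdFinEquiv.symm i).2) ^ 2 :=
        (Equiv.sum_comp finProdFinEquiv.symm _).symm

lemma isSOSForm_sum {d : ℕ} {ι : Type*} (s : Finset ι) (f : ι → MvPolynomial (Fin n) ℝ)
    (h : ∀ i ∈ s, IsSOSForm n d (f i)) : IsSOSForm n d (∑ i ∈ s, f i) :=
  Finset.sum_induction f _ (fun _ _ => IsSOSForm.add) (isSOSForm_zero d) h

lemma isSOSForm_qpow (k : ℕ) :
    IsSOSForm n k ((∑ i : Fin n, X i ^ 2 : MvPolynomial (Fin n) ℝ) ^ k) := by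
  induction k with
  | zero => simpa using isSOSForm_sq (isHomogeneous_one (Fin n) ℝ)
  | succ m ih =>
      rw [pow_succ]
      exact ih.mul (isSOSForm_sum _ _ fun i _ => isSOSForm_sq (isHomogeneous_X ℝ i))

lemma prod_X_pow_univ (β : Fin n →₀ ℕ) :
    ∏ i : Fin n, (X i : MvPolynomial (Fin n) ℝ) ^ β i = monomial β (1 : ℝ) := by
  rw [← prod_X_pow_eq_monomial]
  exact (Finset.prod_subset (Finset.subset_univ _)
    (by intro i _ h; simp [Finsupp.notMem_support_iff.mp h])).symm

/-- Multinomial expansion of `(∑ Xᵢ²)^k` with positive coefficients. -/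
lemma qpow_rep (k : ℕ) :
    (∑ i : Fin n, X i ^ 2 : MvPolynomial (Fin n) ℝ) ^ k =
      ∑ m ∈ piAntidiag (univ : Finset (Fin n)) k,
        ((Nat.multinomial univ m : ℝ)) •
          (monomial (equivFunOnFinite.symm m) (1 : ℝ)) ^ 2 := by
  rw [Finset.sum_pow_eq_sum_piAntidiag]
  refine Finset.sum_congr rfl fun m _ => ?_
  have h1 : ∏ i : Fin n, ((X i : MvPolynomial (Fin n) ℝ) ^ 2) ^ m i =
      (monomial (equivFunOnFinite.symm m) (1 : ℝ)) ^ 2 := by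
    have : ∏ i : Fin n, ((X i : MvPolynomial (Fin n) ℝ) ^ 2) ^ m i =
        ∏ i : Fin n, ((X i : MvPolynomial (Fin n) ℝ) ^ m i) ^ 2 := by
      refine Finset.prod_congr rfl fun i _ => ?_
      rw [← pow_mul, ← pow_mul, mul_comm]
    rw [this, Finset.prod_pow, ← prod_X_pow_univ (equivFunOnFinite.symm m)]
    simp
  rw [h1, smul_eq_C_mul, map_natCast]

lemma exists_le_degree (α : Fin n →₀ ℕ) :
    ∀ m : ℕ, m ≤ α.degree → ∃ β : Fin n →₀ ℕ, β ≤ α ∧ β.degree = m := by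
  intro m
  induction m with
  | zero => exact fun _ => ⟨0, zero_le, map_zero _⟩
  | succ m ih =>
      intro hm
      obtain ⟨β, hβα, hβd⟩ := ih (by omega)
      have hne' : ∃ i, β i < α i := by
        by_contra hcon
        push_neg at hcon
        have heq : β = α := Finsupp.ext fun i =>
          le_antisymm (Finsupp.le_def.mp hβα i) (hcon i)
        rw [heq] at hβd; omega
      obtain ⟨i, hi⟩ := hne'
      refine ⟨β + Finsupp.single i 1, ?_, ?_⟩
      · rw [Finsupp.le_def]
        intro j
        rcases eq_or_ne j i with rfl | hj
        · rw [Finsupp.add_apply, Finsupp.single_eq_same]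
          omega
        · rw [Finsupp.add_apply, Finsupp.single_eq_of_ne hj, add_zero]
          exact Finsupp.le_def.mp hβα j
      · rw [degree_add', hβd, degree_single']

lemma exists_split (α : Fin n →₀ ℕ) (k : ℕ) (hα : α.degree = 2 * k) :
    ∃ β γ : Fin n →₀ ℕ, β.degree = k ∧ γ.degree = k ∧ β + γ = α := by
  obtain ⟨β, hβα, hβd⟩ := exists_le_degree α k (by omega)
  refine ⟨β, α - β, hβd, ?_, ?_⟩
  · have h1 : β + (α - β) = α := add_tsub_cancel_of_le hβα
    have := degree_add' β (α - β)
    rw [h1, hα, hβd] at this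
    omega
  · exact add_tsub_cancel_of_le hβα

lemma square_expand (u v : MvPolynomial (Fin n) ℝ) (s : ℝ) :
    (u + s • v) ^ 2 = u ^ 2 + (2 * s) • (u * v) + (s ^ 2) • v ^ 2 := by
  simp only [smul_eq_C_mul, map_mul, map_pow, map_ofNat]
  ring

/-- Absorbing a small multiple of a single monomial of degree `2k` into `(∑ Xᵢ²)^k`. -/
lemma absorb_mono (k : ℕ) (α : Fin n →₀ ℕ) :
    ∃ ε : ℝ, 0 < ε ∧ ∀ t : ℝ, |t| ≤ ε → α.degree = 2 * k →
      IsSOSForm n k ((∑ i : Fin n, X i ^ 2 : MvPolynomial (Fin n) ℝ) ^ k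
        + t • monomial α (1 : ℝ)) := by
  classical
  by_cases hα : α.degree = 2 * k
  swap
  · exact ⟨1, one_pos, fun t _ h => absurd h hα⟩
  obtain ⟨β, γ, hβ, hγ, hβγ⟩ := exists_split α k hα
  set c : (Fin n → ℕ) → ℝ := fun m => (Nat.multinomial univ m : ℝ) with hc
  have hcpos : ∀ m, 0 < c m := fun m => by
    simp only [hc]; exact_mod_cast Nat.multinomial_pos _ _
  set A := piAntidiag (univ : Finset (Fin n)) k with hA
  have hmemA : ∀ δ : Fin n →₀ ℕ, δ.degree = k → ⇑δ ∈ A := by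
    intro δ hδ
    rw [hA, mem_piAntidiag]
    exact ⟨by rw [← degree_sum_univ]; exact hδ, fun i _ => Finset.mem_univ i⟩
  have hβA : ⇑β ∈ A := hmemA β hβ
  have hγA : ⇑γ ∈ A := hmemA γ hγ
  set P : (Fin n → ℕ) → MvPolynomial (Fin n) ℝ :=
    fun m => monomial (equivFunOnFinite.symm m) (1 : ℝ) with hP
  have hPβ : P ⇑β = monomial β 1 := by rw [hP]; simp
  have hPγ : P ⇑γ = monomial γ 1 := by rw [hP]; simp
  have hPhom : ∀ m ∈ A, (P m).IsHomogeneous k := by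
    intro m hm
    rw [hA, mem_piAntidiag] at hm
    exact isHomogeneous_monomial _ (by rw [degree_sum_univ]; simpa using hm.1)
  refine ⟨min (c ⇑β) (c ⇑γ), lt_min (hcpos _) (hcpos _), fun t ht _ => ?_⟩
  set a : ℝ := |t| / 2 with ha
  set s : ℝ := if 0 ≤ t then 1 else -1 with hs
  have hs2 : s ^ 2 = 1 := by rw [hs]; split <;> norm_num
  have hts : a * (2 * s) = t := by
    rw [ha, hs]; split <;> rename_i h
    · rw [abs_of_nonneg h]; ring
    · rw [abs_of_neg (not_le.mp h)]; ring
  have hanon : 0 ≤ a := by positivity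
  have key : (∑ i : Fin n, X i ^ 2 : MvPolynomial (Fin n) ℝ) ^ k + t • monomial α (1 : ℝ) =
      (∑ m ∈ A, ((c m - (if m = ⇑β then a else 0) - (if m = ⇑γ then a else 0)) • (P m) ^ 2))
        + a • (P ⇑β + s • P ⇑γ) ^ 2 := by
    have e1 : ∀ m ∈ A, ((c m - (if m = ⇑β then a else 0) - (if m = ⇑γ then a else 0)) • (P m) ^ 2)
        = c m • P m ^ 2 - (if m = ⇑β then a • P m ^ 2 else 0)
          - (if m = ⇑γ then a • P m ^ 2 else 0) := by
      intro m _
      rw [sub_smul, sub_smul]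
      congr 1 <;> [skip; split <;> simp]
      congr 1; split <;> simp
    rw [Finset.sum_congr rfl e1]
    rw [Finset.sum_sub_distrib, Finset.sum_sub_distrib, Finset.sum_ite_eq' A (⇑β),
      Finset.sum_ite_eq' A (⇑γ), if_pos hβA, if_pos hγA]
    rw [square_expand, smul_add, smul_add, smul_smul, smul_smul, hts, hs2, mul_one]
    rw [← qpow_rep]
    have hmono : monomial α (1 : ℝ) = P ⇑β * P ⇑γ := by
      rw [hPβ, hPγ, monomial_mul, mul_one, hβγ]
    rw [hmono]
    abel
  rw [key]
  refine IsSOSForm.add (isSOSForm_sum _ _ fun m hm => ?_) ?_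
  · have hnn : 0 ≤ c m - (if m = ⇑β then a else 0) - (if m = ⇑γ then a else 0) := by
      have htβ : |t| ≤ c ⇑β := le_trans ht (min_le_left _ _)
      have htγ : |t| ≤ c ⇑γ := le_trans ht (min_le_right _ _)
      have ha2 : a + a = |t| := by rw [ha]; ring
      have key1 : (if m = ⇑β then a else 0) + (if m = ⇑γ then a else 0) ≤ c m := by
        by_cases h1 : m = ⇑β
        · by_cases h2 : m = ⇑γ
          · rw [if_pos h1, if_pos h2]
            have h3 : |t| ≤ c m := by rw [h1]; exact htβ
            linarith
          · rw [if_pos h1, if_neg h2, add_zero]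
            have h3 : |t| ≤ c m := by rw [h1]; exact htβ
            linarith [abs_nonneg t]
        · by_cases h2 : m = ⇑γ
          · rw [if_neg h1, if_pos h2, zero_add]
            have h3 : |t| ≤ c m := by rw [h2]; exact htγ
            linarith [abs_nonneg t]
          · rw [if_neg h1, if_neg h2, add_zero]
            exact (hcpos m).le
      linarith [key1]
    exact (isSOSForm_sq (hPhom m hm)).smul hnn
  · refine (isSOSForm_sq ?_).smul hanon
    exact ((hPβ ▸ isHomogeneous_monomial _ hβ).add
      (isHomogeneous_smul s (hPγ ▸ isHomogeneous_monomial _ hγ)))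

/-- Uniform absorption: all small homogeneous perturbations of `(∑ Xᵢ²)^k` are sos. -/
lemma absorb_all (k : ℕ) :
    ∃ ε : ℝ, 0 < ε ∧ ∀ p : MvPolynomial (Fin n) ℝ, p.IsHomogeneous (2 * k) →
      (∀ α, |coeff α p| ≤ ε) →
      IsSOSForm n k ((∑ i : Fin n, X i ^ 2 : MvPolynomial (Fin n) ℝ) ^ k + p) := by
  classical
  set A := Finset.finsuppAntidiag (univ : Finset (Fin n)) (2 * k) with hA
  have hmemA : ∀ α : Fin n →₀ ℕ, α.degree = 2 * k → α ∈ A := by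
    intro α hα
    rw [hA, Finset.mem_finsuppAntidiag]
    exact ⟨by rw [← degree_sum_univ]; exact hα, Finset.subset_univ _⟩
  have hdecomp : ∀ p : MvPolynomial (Fin n) ℝ, p.IsHomogeneous (2 * k) →
      p = ∑ α ∈ A, monomial α (coeff α p) := by
    intro p hp
    have hsub : p.support ⊆ A := by
      intro α hα
      refine hmemA α ?_
      by_contra hne
      exact (MvPolynomial.mem_support_iff.mp hα) (hp.coeff_eq_zero hne)
    conv_lhs => rw [p.as_sum]
    exact Finset.sum_subset hsub fun α _ hα => by
      rw [MvPolynomial.notMem_support_iff.mp hα, map_zero]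
  choose ε₀ hε₀pos hε₀ using fun α : Fin n →₀ ℕ => absorb_mono (n := n) k α
  by_cases hAne : A.Nonempty
  · set N := A.card with hN
    have hNpos : 0 < N := Finset.card_pos.mpr hAne
    set δ := A.inf' hAne ε₀ with hδ
    have hδpos : 0 < δ := (Finset.lt_inf'_iff _).mpr fun α _ => hε₀pos α
    refine ⟨δ / N, by positivity, fun p hp hcoeff => ?_⟩
    have key : (∑ i : Fin n, X i ^ 2 : MvPolynomial (Fin n) ℝ) ^ k + p =
        ∑ α ∈ A, (((N : ℝ)⁻¹ • (∑ i : Fin n, X i ^ 2 : MvPolynomial (Fin n) ℝ) ^ k)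
          + monomial α (coeff α p)) := by
      rw [Finset.sum_add_distrib, Finset.sum_const, ← hdecomp p hp]
      congr 1
      rw [← Nat.cast_smul_eq_nsmul ℝ, smul_smul, mul_inv_cancel₀ (by exact_mod_cast hNpos.ne'), one_smul]
    rw [key]
    refine isSOSForm_sum _ _ fun α hα => ?_
    have hαdeg : α.degree = 2 * k := by
      rw [hA, Finset.mem_finsuppAntidiag] at hα
      rw [degree_sum_univ]; exact hα.1
    have e1 : ((N : ℝ)⁻¹ • (∑ i : Fin n, X i ^ 2 : MvPolynomial (Fin n) ℝ) ^ k)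
        + monomial α (coeff α p) =
        (N : ℝ)⁻¹ • ((∑ i : Fin n, X i ^ 2 : MvPolynomial (Fin n) ℝ) ^ k
          + ((N : ℝ) * coeff α p) • monomial α (1 : ℝ)) := by
      rw [smul_add, smul_smul, ← mul_assoc, inv_mul_cancel₀ (by exact_mod_cast hNpos.ne'), one_mul,
        MvPolynomial.smul_monomial, smul_eq_mul, mul_one]
    rw [e1]
    refine IsSOSForm.smul (inv_nonneg.mpr (Nat.cast_nonneg _)) ?_
    refine hε₀ α ((N : ℝ) * coeff α p) ?_ hαdeg
    rw [abs_mul, Nat.abs_cast]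
    calc (N : ℝ) * |coeff α p| ≤ (N : ℝ) * (δ / N) :=
          mul_le_mul_of_nonneg_left (hcoeff α) (Nat.cast_nonneg _)
      _ = δ := by field_simp
      _ ≤ ε₀ α := Finset.inf'_le _ hα
  · refine ⟨1, one_pos, fun p hp _ => ?_⟩
    have hp0 : p = 0 := by
      rw [hdecomp p hp, Finset.not_nonempty_iff_eq_empty.mp hAne, Finset.sum_empty]
    have hq0 : (∑ i : Fin n, X i ^ 2 : MvPolynomial (Fin n) ℝ) ^ k = 0 ∨ k = 0 := by
      by_cases hk : k = 0
      · exact Or.inr hk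
      · left
        have hn0 : n = 0 := by
          by_contra hn
          exact absurd (hmemA (Finsupp.single ⟨0, Nat.pos_of_ne_zero hn⟩ (2 * k))
            (degree_single' _ _)) (by simp [Finset.not_nonempty_iff_eq_empty.mp hAne])
        subst hn0
        rw [show (∑ i : Fin 0, (X i : MvPolynomial (Fin 0) ℝ) ^ 2) = 0 by simp,
          zero_pow hk]
    rcases hq0 with h | h
    · rw [hp0, h, add_zero]; exact isSOSForm_zero k
    · exfalso
      apply hAne
      exact ⟨0, hmemA 0 (by simp [h, map_zero])⟩

/-- From interior membership, extract a sos margin `f - ε q^m`. -/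
lemma extract_margin {n : ℕ} (m : ℕ) (h : homogeneousSubmodule (Fin n) ℝ (2 * m))
    (hh : h ∈ interior (SigmaCone n m)) :
    ∃ ε : ℝ, 0 < ε ∧ IsSOSForm n m ((h : MvPolynomial (Fin n) ℝ)
      - ε • ((∑ i : Fin n, X i ^ 2 : MvPolynomial (Fin n) ℝ) ^ m)) := by
  have hqhom : ((∑ i : Fin n, X i ^ 2 : MvPolynomial (Fin n) ℝ) ^ m).IsHomogeneous (2 * m) := by
    have h2 : (∑ i : Fin n, X i ^ 2 : MvPolynomial (Fin n) ℝ).IsHomogeneous 2 :=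
      IsHomogeneous.sum _ _ _ fun i _ => isHomogeneous_X_pow (R := ℝ) i 2
    simpa [mul_comm] using h2.pow m
  set Q : homogeneousSubmodule (Fin n) ℝ (2 * m) :=
    ⟨_, (mem_homogeneousSubmodule _ _).mpr hqhom⟩ with hQ
  haveI := IsModuleTopology.toContinuousAdd ℝ (homogeneousSubmodule (Fin n) ℝ (2 * m))
  haveI := IsModuleTopology.toContinuousSMul ℝ (homogeneousSubmodule (Fin n) ℝ (2 * m))
  have hcont : Continuous (fun t : ℝ => h + (-t) • Q) :=
    continuous_const.add (continuous_neg.smul continuous_const)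
  have hopen : IsOpen ((fun t : ℝ => h + (-t) • Q) ⁻¹' interior (SigmaCone n m)) :=
    hcont.isOpen_preimage _ isOpen_interior
  have h0 : (0 : ℝ) ∈ (fun t : ℝ => h + (-t) • Q) ⁻¹' interior (SigmaCone n m) := by
    simpa using hh
  obtain ⟨r, hr, hball⟩ := Metric.isOpen_iff.mp hopen 0 h0
  refine ⟨r / 2, by positivity, ?_⟩
  have hmem : h + (-(r / 2)) • Q ∈ SigmaCone n m := by
    refine interior_subset (hball ?_)
    have : dist (r / 2) (0 : ℝ) < r := by
      rw [Real.dist_eq, sub_zero, abs_of_pos (by positivity : (0:ℝ) < r / 2)]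
      linarith
    exact this
  have := hmem
  simp only [SigmaCone, Set.mem_setOf_eq] at this
  convert this using 1
  push_cast [hQ]
  module

end SOSAux

open SOSAux Finset in
theorem mul_mem_interior_sigmaCone (n d e : ℕ)
    (f : homogeneousSubmodule (Fin n) ℝ (2 * d))
    (g : homogeneousSubmodule (Fin n) ℝ (2 * e))
    (hmem : (f : MvPolynomial (Fin n) ℝ) * g ∈ homogeneousSubmodule (Fin n) ℝ (2 * (d + e)))
    (hf : f ∈ interior (SigmaCone n d)) (hg : g ∈ interior (SigmaCone n e)) :
    (⟨(f : MvPolynomial (Fin n) ℝ) * g, hmem⟩ : homogeneousSubmodule (Fin n) ℝ (2 * (d + e)))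
      ∈ interior (SigmaCone n (d + e)) := by
  classical
  obtain ⟨ε₁, hε₁, hF⟩ := extract_margin d f hf
  obtain ⟨ε₂, hε₂, hG⟩ := extract_margin e g hg
  obtain ⟨ε₃, hε₃, habs⟩ := absorb_all (n := n) (d + e)
  set q : MvPolynomial (Fin n) ℝ := ∑ i : Fin n, X i ^ 2 with hq
  set F : MvPolynomial (Fin n) ℝ := (f : MvPolynomial (Fin n) ℝ) - ε₁ • q ^ d with hFdef
  set G : MvPolynomial (Fin n) ℝ := (g : MvPolynomial (Fin n) ℝ) - ε₂ • q ^ e with hGdef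
  set c : ℝ := ε₁ * ε₂ with hcdef
  have hc : 0 < c := mul_pos hε₁ hε₂
  have hS : IsSOSForm n (d + e)
      (F * G + (ε₁ • q ^ d) * G + F * (ε₂ • q ^ e)) :=
    ((hF.mul hG).add (((isSOSForm_qpow d).smul hε₁.le).mul hG)).add
      (hF.mul ((isSOSForm_qpow e).smul hε₂.le))
  have key : (f : MvPolynomial (Fin n) ℝ) * g - c • q ^ (d + e) =
      F * G + (ε₁ • q ^ d) * G + F * (ε₂ • q ^ e) := by
    rw [hFdef, hGdef, hcdef, pow_add]
    simp only [smul_eq_C_mul, map_mul]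
    ring
  have hsos : IsSOSForm n (d + e) ((f : MvPolynomial (Fin n) ℝ) * g - c • q ^ (d + e)) := by
    rw [key]; exact hS
  -- Now show a neighborhood of f*g lies in the cone
  set A := Finset.finsuppAntidiag (univ : Finset (Fin n)) (2 * (d + e)) with hA
  set fg : homogeneousSubmodule (Fin n) ℝ (2 * (d + e)) := ⟨_, hmem⟩ with hfg
  set U : Set (homogeneousSubmodule (Fin n) ℝ (2 * (d + e))) :=
    ⋂ α ∈ A, {h | |coeff α ((h : MvPolynomial (Fin n) ℝ)) - coeff α ((fg : MvPolynomial (Fin n) ℝ))| < c * ε₃} with hU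
  have hUopen : IsOpen U := by
    refine isOpen_biInter_finset fun α _ => ?_
    have hcont : Continuous (fun h : homogeneousSubmodule (Fin n) ℝ (2 * (d + e)) =>
        coeff α (h : MvPolynomial (Fin n) ℝ)) :=
      IsModuleTopology.continuous_of_linearMap ((lcoeff ℝ α).comp (Submodule.subtype _))
    have : {h : homogeneousSubmodule (Fin n) ℝ (2 * (d + e)) |
        |coeff α ((h : MvPolynomial (Fin n) ℝ)) - coeff α ((fg : MvPolynomial (Fin n) ℝ))| < c * ε₃} =
        (fun h : homogeneousSubmodule (Fin n) ℝ (2 * (d + e)) =>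
          coeff α (h : MvPolynomial (Fin n) ℝ)) ⁻¹'
          Metric.ball (coeff α ((fg : MvPolynomial (Fin n) ℝ))) (c * ε₃) := by
      ext h; simp [Metric.mem_ball, Real.dist_eq]
    rw [this]
    exact hcont.isOpen_preimage _ Metric.isOpen_ball
  have hfgU : fg ∈ U := by
    simp only [hU, Set.mem_iInter, Set.mem_setOf_eq]
    intro α _
    simpa using by positivity
  have hUsub : U ⊆ SigmaCone n (d + e) := by
    intro h hh
    simp only [SigmaCone, Set.mem_setOf_eq]
    set p : MvPolynomial (Fin n) ℝ :=
      c⁻¹ • ((h : MvPolynomial (Fin n) ℝ) - (fg : MvPolynomial (Fin n) ℝ)) with hp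
    have hpmem : p ∈ homogeneousSubmodule (Fin n) ℝ (2 * (d + e)) :=
      Submodule.smul_mem _ _ (Submodule.sub_mem _ h.2 fg.2)
    have hphom : p.IsHomogeneous (2 * (d + e)) :=
      (mem_homogeneousSubmodule _ _).mp hpmem
    have hpb : ∀ α, |coeff α p| ≤ ε₃ := by
      intro α
      by_cases hdeg : α.degree = 2 * (d + e)
      · have hαA : α ∈ A := by
          rw [hA, Finset.mem_finsuppAntidiag]
          exact ⟨by rw [← degree_sum_univ]; exact hdeg, Finset.subset_univ _⟩
        have := Set.mem_iInter₂.mp hh α hαA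
        simp only [Set.mem_setOf_eq] at this
        rw [hp, MvPolynomial.coeff_smul, smul_eq_mul, abs_mul,
          abs_of_pos (inv_pos.mpr hc), MvPolynomial.coeff_sub]
        calc c⁻¹ * |coeff α (h : MvPolynomial (Fin n) ℝ) - coeff α (fg : MvPolynomial (Fin n) ℝ)|
            ≤ c⁻¹ * (c * ε₃) := mul_le_mul_of_nonneg_left this.le (by positivity)
          _ = ε₃ := by field_simp
      · rw [hphom.coeff_eq_zero hdeg, abs_zero]
        exact hε₃.le
    have hqp : IsSOSForm n (d + e) (q ^ (d + e) + p) := habs p hphom hpb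
    have hfinal : (h : MvPolynomial (Fin n) ℝ) =
        ((f : MvPolynomial (Fin n) ℝ) * g - c • q ^ (d + e)) + c • (q ^ (d + e) + p) := by
      rw [hp, smul_add, smul_inv_smul₀ hc.ne']
      have : ((fg : homogeneousSubmodule (Fin n) ℝ (2 * (d + e))) : MvPolynomial (Fin n) ℝ)
          = (f : MvPolynomial (Fin n) ℝ) * g := rfl
      rw [this]
      abel
    rw [hfinal]
    exact hsos.add (hqp.smul hc.le)
  exact mem_interior.mpr ⟨U, hUsub, hUopen, hfgU⟩
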